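/- Let ε₁ and c₂ = 4m(10^m+1) be the constants from the Gram–Schmidt angle lemma. If H_1, H_2 ∈ G(n,m) satisfy 0 < ∠(H_1,H_2) = α < ε₁, then there exists an (m−1)-dimensional subspace W ⊂ H_1 such that π_{H_1}(S(H_1,H_2)) ⊂ {y ∈ H_1 : dist(y,W) ≤ 5c₂/α}, where S(H_1,H_2) = {y ∈ ℝ^n : dist(y,H_i) ≤ 1 for i=1,2}. -/

import Mathlib

open scoped RealInnerProductSpace

/-- The orthogonal projection onto a subspace of Euclidean space, viewed as a
continuous linear endomorphism of the ambient space. -/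
noncomputable def projL {n : ℕ} (X : Submodule ℝ (EuclideanSpace ℝ (Fin n))) :
    EuclideanSpace ℝ (Fin n) →L[ℝ] EuclideanSpace ℝ (Fin n) :=
  X.subtypeL.comp (X.orthogonalProjectionOnto)

section helpers
variable {n : ℕ} (K : Submodule ℝ (EuclideanSpace ℝ (Fin n)))

lemma projL_mem (x : EuclideanSpace ℝ (Fin n)) : projL K x ∈ K :=
  (K.orthogonalProjectionOnto x).2

lemma projL_eq_self {x : EuclideanSpace ℝ (Fin n)} (h : x ∈ K) : projL K x = x :=
  Submodule.starProjection_eq_self_iff.mpr h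

lemma projL_inner (u v : EuclideanSpace ℝ (Fin n)) :
    ⟪projL K u, v⟫ = ⟪u, projL K v⟫ :=
  K.inner_starProjection_left_eq_right u v

lemma sub_projL_mem_orthogonal (x : EuclideanSpace ℝ (Fin n)) : x - projL K x ∈ Kᗮ :=
  K.sub_starProjection_mem_orthogonal x

lemma inner_sub_projL (x : EuclideanSpace ℝ (Fin n)) {z : EuclideanSpace ℝ (Fin n)}
    (hz : z ∈ K) : ⟪z, x - projL K x⟫ = 0 :=
  (Submodule.mem_orthogonal _ _).mp (sub_projL_mem_orthogonal K x) z hz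

lemma norm_sub_projL_le (y : EuclideanSpace ℝ (Fin n)) {z : EuclideanSpace ℝ (Fin n)}
    (hz : z ∈ K) : ‖y - projL K y‖ ≤ ‖y - z‖ := by
  have h0 : ⟪projL K y - z, y - projL K y⟫ = 0 :=
    inner_sub_projL K y (K.sub_mem (projL_mem K y) hz)
  have hexp : ‖y - z‖ ^ 2 = ‖y - projL K y‖ ^ 2 + ‖projL K y - z‖ ^ 2 := by
    have : y - z = (y - projL K y) + (projL K y - z) := by abel
    rw [this, norm_add_sq_real, real_inner_comm, h0]
    ring
  nlinarith [norm_nonneg (y - z), norm_nonneg (y - projL K y), sq_nonneg (‖projL K y - z‖)]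

lemma norm_sub_projL_le_infDist (y : EuclideanSpace ℝ (Fin n)) :
    ‖y - projL K y‖ ≤ Metric.infDist y (K : Set (EuclideanSpace ℝ (Fin n))) := by
  rw [Metric.infDist_eq_iInf]
  have : Nonempty (K : Set (EuclideanSpace ℝ (Fin n))) := ⟨0, K.zero_mem⟩
  refine le_ciInf fun z => ?_
  rw [dist_eq_norm]
  exact norm_sub_projL_le K y z.2

lemma norm_projL_le (x : EuclideanSpace ℝ (Fin n)) : ‖projL K x‖ ≤ ‖x‖ := by
  have h0 : ⟪projL K x, x - projL K x⟫ = 0 := inner_sub_projL K x (projL_mem K x)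
  have hexp : ‖x‖ ^ 2 = ‖projL K x‖ ^ 2 + ‖x - projL K x‖ ^ 2 := by
    have : x = projL K x + (x - projL K x) := by abel
    nth_rewrite 1 [this]
    rw [norm_add_sq_real, h0]; ring
  nlinarith [norm_nonneg x, norm_nonneg (projL K x), sq_nonneg ‖x - projL K x‖]

end helpers

lemma cancel_aux {c K : ℝ} (hK : 0 ≤ K) (key : ∀ t : ℝ, 2 * t * c ≤ t ^ 2 * K) : c = 0 := by
  set s := c / (K + 1) with hs
  have hK1 : (0:ℝ) < K + 1 := by linarith
  have hc : c = s * (K + 1) := by rw [hs]; field_simp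
  clear_value s
  have h := key s
  rw [hc] at h ⊢
  have h0 : s ^ 2 ≤ 0 := by nlinarith [sq_nonneg s]
  have hs0 : s = 0 := pow_eq_zero_iff (two_ne_zero) |>.mp (le_antisymm h0 (sq_nonneg s))
  rw [hs0, zero_mul]

set_option maxHeartbeats 1000000 in
/-- If `H₁, H₂ ∈ G(n,m)` satisfy `0 < ∠(H₁,H₂) = α < ε₁`, then there is an
`(m−1)`-dimensional subspace `W ⊆ H₁` such that the projection of
`S(H₁,H₂) = {y : dist(y,H_i) ≤ 1, i = 1,2}` onto `H₁` is contained in the slab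
`{y ∈ H₁ : dist(y,W) ≤ 5c₂/α}`, where `c₂ = 4m(10^m+1)` and `ε₁ = 1/(10(10^m+1))`. -/
theorem proj_slab {n m : ℕ}
    (H₁ H₂ : Submodule ℝ (EuclideanSpace ℝ (Fin n)))
    (h₁ : Module.finrank ℝ H₁ = m) (h₂ : Module.finrank ℝ H₂ = m)
    (α : ℝ) (hα : α = ‖projL H₁ - projL H₂‖)
    (hα0 : 0 < α) (hα1 : α < 10⁻¹ * ((10 : ℝ) ^ m + 1)⁻¹)
    (S : Set (EuclideanSpace ℝ (Fin n)))
    (hS : S = {y | Metric.infDist y (H₁ : Set (EuclideanSpace ℝ (Fin n))) ≤ 1 ∧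
                   Metric.infDist y (H₂ : Set (EuclideanSpace ℝ (Fin n))) ≤ 1}) :
    ∃ W : Submodule ℝ (EuclideanSpace ℝ (Fin n)), W ≤ H₁ ∧ Module.finrank ℝ W = m - 1 ∧
      ∀ y ∈ S, Metric.infDist (projL H₁ y) (W : Set (EuclideanSpace ℝ (Fin n))) ≤
        5 * (4 * m * ((10 : ℝ) ^ m + 1)) / α := by
  -- m is positive
  have hm : 0 < m := by
    rcases Nat.eq_zero_or_pos m with hm0 | hm; swap
    · exact hm
    exfalso
    have e₁ : H₁ = ⊥ := Submodule.finrank_eq_zero.mp (by rw [h₁, hm0])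
    have e₂ : H₂ = ⊥ := Submodule.finrank_eq_zero.mp (by rw [h₂, hm0])
    rw [hα, e₁, e₂, sub_self, norm_zero] at hα0
    exact lt_irrefl 0 hα0
  set P₁ := projL H₁ with hP₁def
  set P₂ := projL H₂ with hP₂def
  -- pick a maximizer e of ‖x - P₂ x‖ on the unit sphere of H₁
  have : Nontrivial ↥H₁ := Module.nontrivial_of_finrank_pos (R := ℝ) (by rw [h₁]; exact hm)
  obtain ⟨x₁, hx₁⟩ : ∃ x : ↥H₁, ‖x‖ = 1 := exists_norm_eq ↥H₁ zero_le_one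
  have hg : Continuous (fun x : ↥H₁ => ‖(x : (EuclideanSpace ℝ (Fin n))) - P₂ x‖) :=
    (continuous_subtype_val.sub (P₂.continuous.comp continuous_subtype_val)).norm
  obtain ⟨e', he's, hemax⟩ := (isCompact_sphere (0 : ↥H₁) 1).exists_isMaxOn
    ⟨x₁, by simpa [mem_sphere_zero_iff_norm] using hx₁⟩ hg.continuousOn
  set e : (EuclideanSpace ℝ (Fin n)) := (e' : (EuclideanSpace ℝ (Fin n))) with hedef
  have heH : e ∈ H₁ := e'.2
  have he1 : ‖e‖ = 1 := by
    have := mem_sphere_zero_iff_norm.mp he's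
    simpa using this
  set β := ‖e - P₂ e‖ with hβdef
  have hβ0 : 0 ≤ β := norm_nonneg _
  -- Claim A : maximality
  have hmax : ∀ x ∈ H₁, ‖x - P₂ x‖ ≤ β * ‖x‖ := by
    intro x hx
    rcases eq_or_ne x 0 with rfl | hx0
    · simp
    have hn : 0 < ‖x‖ := norm_pos_iff.mpr hx0
    have hsx : (‖x‖⁻¹ • (⟨x, hx⟩ : ↥H₁)) ∈ Metric.sphere (0 : ↥H₁) 1 := by
      rw [mem_sphere_zero_iff_norm, norm_smul]
      simp only [norm_inv, norm_norm]
      rw [show ‖(⟨x, hx⟩ : ↥H₁)‖ = ‖x‖ from rfl]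
      field_simp
    have hb := hemax hsx
    simp only [Set.mem_setOf_eq] at hb
    have hco : ((‖x‖⁻¹ • (⟨x, hx⟩ : ↥H₁) : ↥H₁) : (EuclideanSpace ℝ (Fin n))) = ‖x‖⁻¹ • x := rfl
    rw [hco, map_smul, ← smul_sub, norm_smul, norm_inv, norm_norm] at hb
    rw [← hβdef] at hb
    calc ‖x - P₂ x‖ = ‖x‖ * (‖x‖⁻¹ * ‖x - P₂ x‖) := by field_simp
    _ ≤ ‖x‖ * β := by
        apply mul_le_mul_of_nonneg_left hb (norm_nonneg x)
    _ = β * ‖x‖ := mul_comm _ _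
  -- bound for P₁ ∘ (1 - P₂)
  have hPB : ∀ x : (EuclideanSpace ℝ (Fin n)), ‖P₁ (x - P₂ x)‖ ≤ β * ‖x‖ := by
    intro x
    set q := P₁ (x - P₂ x) with hq
    have hqH : q ∈ H₁ := projL_mem H₁ _
    have h1 : ‖q‖ ^ 2 = ⟪x - P₂ x, q⟫ := by
      rw [← real_inner_self_eq_norm_sq]
      rw [hq, projL_inner, projL_eq_self H₁ hqH]
    have h2 : ⟪x - P₂ x, q⟫ = ⟪x, q - P₂ q⟫ := by
      rw [inner_sub_left, inner_sub_right, hP₂def, projL_inner]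
    have h3 : |⟪x, q - P₂ q⟫| ≤ ‖x‖ * (β * ‖q‖) :=
      (abs_real_inner_le_norm _ _).trans
        (mul_le_mul_of_nonneg_left (hmax q hqH) (norm_nonneg x))
    have h4 : ‖q‖ ^ 2 ≤ ‖x‖ * (β * ‖q‖) := by
      rw [h1, h2]; exact (le_abs_self _).trans h3
    rcases (norm_nonneg q).eq_or_lt' with hq0 | hq0
    · rw [hq0]
      positivity
    · nlinarith [norm_nonneg x]
  -- α ≤ 3 β
  have hten : (1:ℝ) ≤ (10:ℝ) ^ m := one_le_pow₀ (by norm_num)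
  have hαβ : α ≤ 3 * β := by
    rcases le_or_gt (1/2 : ℝ) β with hb | hb
    · have h10 : ((10:ℝ) ^ m + 1)⁻¹ ≤ 1 := by
        rw [inv_le_one_iff₀]; right; linarith
      nlinarith
    · -- injectivity of P₂ restricted to H₁
      set L : ↥H₁ →ₗ[ℝ] ↥H₂ :=
        ((H₂.orthogonalProjectionOnto).toLinearMap).comp H₁.subtype with hLdef
      have hinj : Function.Injective L := by
        rw [injective_iff_map_eq_zero]
        intro z hz
        have hz0 : H₂.orthogonalProjectionOnto (z : (EuclideanSpace ℝ (Fin n))) = 0 := hz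
        have hz' : P₂ (z : (EuclideanSpace ℝ (Fin n))) = 0 := by
          simp only [hP₂def, projL, ContinuousLinearMap.comp_apply, hz0]
          simp
        have hzn : ‖(z : (EuclideanSpace ℝ (Fin n)))‖ ≤ β * ‖(z : (EuclideanSpace ℝ (Fin n)))‖ := by
          have := hmax (z : (EuclideanSpace ℝ (Fin n))) z.2
          rwa [hz', sub_zero] at this
        have : (z : (EuclideanSpace ℝ (Fin n))) = 0 := by
          by_contra hne
          have hpos : 0 < ‖(z : (EuclideanSpace ℝ (Fin n)))‖ := norm_pos_iff.mpr hne
          have := mul_lt_mul_of_pos_right hb hpos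
          linarith
        exact Subtype.ext this
      have hsurj : Function.Surjective L :=
        (LinearMap.injective_iff_surjective_of_finrank_eq_finrank
          (by rw [h₁, h₂])).mp hinj
      have hB : ∀ x : (EuclideanSpace ℝ (Fin n)), ‖P₂ x - P₁ (P₂ x)‖ ≤ 2 * β * ‖x‖ := by
        intro x
        obtain ⟨z, hz⟩ := hsurj (H₂.orthogonalProjectionOnto x)
        have hz' : P₂ (z : (EuclideanSpace ℝ (Fin n))) = P₂ x := by
          have : (L z : (EuclideanSpace ℝ (Fin n))) = ((H₂.orthogonalProjectionOnto x : ↥H₂) : (EuclideanSpace ℝ (Fin n))) := congrArg _ hz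
          simpa [hP₂def, projL, hLdef] using this
        have h1 : ‖(z : (EuclideanSpace ℝ (Fin n))) - P₂ (z : (EuclideanSpace ℝ (Fin n)))‖ ≤ β * ‖(z : (EuclideanSpace ℝ (Fin n)))‖ := hmax _ z.2
        have h2 : ‖(z : (EuclideanSpace ℝ (Fin n)))‖ ≤ 2 * ‖P₂ (z : (EuclideanSpace ℝ (Fin n)))‖ := by
          have ht := norm_sub_norm_le (z : (EuclideanSpace ℝ (Fin n))) (P₂ (z : (EuclideanSpace ℝ (Fin n))))
          nlinarith [norm_nonneg (z : (EuclideanSpace ℝ (Fin n)))]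
        have h3 : ‖P₂ x‖ ≤ ‖x‖ := norm_projL_le H₂ x
        have h4 : P₂ x - P₁ (P₂ x) =
            (P₂ (z : (EuclideanSpace ℝ (Fin n))) - (z : (EuclideanSpace ℝ (Fin n)))) - P₁ (P₂ (z : (EuclideanSpace ℝ (Fin n))) - (z : (EuclideanSpace ℝ (Fin n)))) := by
          rw [← hz', map_sub, hP₁def, projL_eq_self H₁ z.2]
          abel
        have h5 : ‖(P₂ (z : (EuclideanSpace ℝ (Fin n))) - (z : (EuclideanSpace ℝ (Fin n)))) - P₁ (P₂ (z : (EuclideanSpace ℝ (Fin n))) - (z : (EuclideanSpace ℝ (Fin n))))‖ ≤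
            ‖P₂ (z : (EuclideanSpace ℝ (Fin n))) - (z : (EuclideanSpace ℝ (Fin n)))‖ := by
          have := norm_sub_projL_le H₁ (P₂ (z : (EuclideanSpace ℝ (Fin n))) - (z : (EuclideanSpace ℝ (Fin n)))) H₁.zero_mem
          simpa using this
        calc ‖P₂ x - P₁ (P₂ x)‖ = ‖(P₂ (z : (EuclideanSpace ℝ (Fin n))) - (z : (EuclideanSpace ℝ (Fin n)))) - P₁ (P₂ (z : (EuclideanSpace ℝ (Fin n))) - (z : (EuclideanSpace ℝ (Fin n))))‖ := by
              rw [h4]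
        _ ≤ ‖P₂ (z : (EuclideanSpace ℝ (Fin n))) - (z : (EuclideanSpace ℝ (Fin n)))‖ := h5
        _ = ‖(z : (EuclideanSpace ℝ (Fin n))) - P₂ (z : (EuclideanSpace ℝ (Fin n)))‖ := norm_sub_rev _ _
        _ ≤ β * ‖(z : (EuclideanSpace ℝ (Fin n)))‖ := h1
        _ ≤ β * (2 * ‖P₂ (z : (EuclideanSpace ℝ (Fin n)))‖) := by
              apply mul_le_mul_of_nonneg_left h2 hβ0
        _ = 2 * β * ‖P₂ x‖ := by rw [hz']; ring
        _ ≤ 2 * β * ‖x‖ := by nlinarith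
      rw [hα]
      refine ContinuousLinearMap.opNorm_le_bound _ (by positivity) fun x => ?_
      have hsplit : (P₁ - P₂) x = P₁ (x - P₂ x) - (P₂ x - P₁ (P₂ x)) := by
        simp only [ContinuousLinearMap.sub_apply, map_sub]
        abel
      rw [hsplit]
      calc ‖P₁ (x - P₂ x) - (P₂ x - P₁ (P₂ x))‖
          ≤ ‖P₁ (x - P₂ x)‖ + ‖P₂ x - P₁ (P₂ x)‖ := norm_sub_le _ _
      _ ≤ β * ‖x‖ + 2 * β * ‖x‖ := add_le_add (hPB x) (hB x)
      _ = 3 * β * ‖x‖ := by ring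
  have hβpos : 0 < β := by linarith
  -- orthogonality property of the maximizer
  have horth : ∀ w : (EuclideanSpace ℝ (Fin n)), w ∈ H₁ → ⟪w, e⟫ = 0 →
      ⟪w - P₂ w, e - P₂ e⟫ = 0 := by
    intro w hw hwe
    have hK0 : 0 ≤ β ^ 2 * ‖w‖ ^ 2 - ‖w - P₂ w‖ ^ 2 := by
      have := hmax w hw
      nlinarith [norm_nonneg (w - P₂ w), norm_nonneg w]
    refine cancel_aux hK0 fun t => ?_
    have hmem : e + t • w ∈ H₁ := H₁.add_mem heH (H₁.smul_mem t hw)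
    have h1 : ‖(e + t • w) - P₂ (e + t • w)‖ ≤ β * ‖e + t • w‖ := hmax _ hmem
    have hre : (e + t • w) - P₂ (e + t • w) = (e - P₂ e) + t • (w - P₂ w) := by
      rw [map_add, map_smul, smul_sub]
      abel
    have hLHS : ‖(e + t • w) - P₂ (e + t • w)‖ ^ 2 =
        β ^ 2 + 2 * t * ⟪w - P₂ w, e - P₂ e⟫ + t ^ 2 * ‖w - P₂ w‖ ^ 2 := by
      rw [hre, norm_add_sq_real, real_inner_smul_right, norm_smul, Real.norm_eq_abs,
        mul_pow, sq_abs, ← hβdef, real_inner_comm (w - P₂ w) (e - P₂ e)]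
      ring
    have hRHS : ‖e + t • w‖ ^ 2 = 1 + t ^ 2 * ‖w‖ ^ 2 := by
      rw [norm_add_sq_real, real_inner_smul_right, norm_smul, Real.norm_eq_abs,
        mul_pow, sq_abs, he1, real_inner_comm, hwe]
      ring
    have h2 : ‖(e + t • w) - P₂ (e + t • w)‖ ^ 2 ≤ β ^ 2 * ‖e + t • w‖ ^ 2 := by
      nlinarith [norm_nonneg ((e + t • w) - P₂ (e + t • w)), norm_nonneg (e + t • w)]
    rw [hLHS, hRHS] at h2
    nlinarith
  -- the subspace W
  have he0 : e ≠ 0 := by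
    intro h
    rw [h, norm_zero] at he1
    norm_num at he1
  set W : Submodule ℝ (EuclideanSpace ℝ (Fin n)) := (ℝ ∙ e)ᗮ ⊓ H₁ with hWdef
  have hWle : W ≤ H₁ := inf_le_right
  have hspan : (ℝ ∙ e) ≤ H₁ := (Submodule.span_singleton_le_iff_mem e H₁).mpr heH
  have hsup : (ℝ ∙ e) ⊔ W = H₁ := by
    apply le_antisymm (sup_le hspan hWle)
    intro x hx
    rw [Submodule.mem_sup]
    refine ⟨⟪x, e⟫ • e, Submodule.smul_mem _ _ (Submodule.mem_span_singleton_self e),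
      x - ⟪x, e⟫ • e, ?_, by abel⟩
    refine Submodule.mem_inf.mpr ⟨?_, H₁.sub_mem hx (H₁.smul_mem _ heH)⟩
    rw [Submodule.mem_orthogonal_singleton_iff_inner_right]
    rw [inner_sub_right, real_inner_smul_right, real_inner_self_eq_norm_sq, he1]
    rw [real_inner_comm]
    ring
  have hinf : (ℝ ∙ e) ⊓ W = ⊥ := by
    rw [eq_bot_iff]
    intro x hx
    have hx1 : x ∈ (ℝ ∙ e) := hx.1
    have hx2 : x ∈ (ℝ ∙ e)ᗮ := hx.2.1
    exact (Submodule.orthogonal_disjoint (ℝ ∙ e)).le_bot ⟨hx1, hx2⟩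
  have hrank : Module.finrank ℝ W = m - 1 := by
    have hfe := Submodule.finrank_sup_add_finrank_inf_eq (ℝ ∙ e) W
    rw [hsup, hinf, h₁, finrank_span_singleton he0, finrank_bot] at hfe
    omega
  refine ⟨W, hWle, hrank, ?_⟩
  -- the slab bound
  intro y hy
  rw [hS] at hy
  obtain ⟨hy1, hy2⟩ := hy
  have hd1 : ‖y - P₁ y‖ ≤ 1 := (norm_sub_projL_le_infDist H₁ y).trans hy1
  have hd2 : ‖y - P₂ y‖ ≤ 1 := (norm_sub_projL_le_infDist H₂ y).trans hy2
  set p : (EuclideanSpace ℝ (Fin n)) := P₁ y with hpdef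
  have hpH : p ∈ H₁ := projL_mem H₁ y
  set t : ℝ := ⟪p, e⟫ with htdef
  set w : (EuclideanSpace ℝ (Fin n)) := p - t • e with hwdef
  have hwH : w ∈ H₁ := H₁.sub_mem hpH (H₁.smul_mem t heH)
  have hwe : ⟪w, e⟫ = 0 := by
    rw [hwdef, inner_sub_left, real_inner_smul_left, real_inner_self_eq_norm_sq, he1, ← htdef]
    ring
  have hwW : w ∈ W := by
    refine Submodule.mem_inf.mpr ⟨?_, hwH⟩
    rw [Submodule.mem_orthogonal_singleton_iff_inner_left]
    exact hwe
  have hdist : Metric.infDist p (W : Set (EuclideanSpace ℝ (Fin n))) ≤ |t| := by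
    have h := Metric.infDist_le_dist_of_mem (x := p) (show w ∈ (W : Set (EuclideanSpace ℝ (Fin n))) from hwW)
    rw [dist_eq_norm] at h
    have : p - w = t • e := by rw [hwdef]; abel
    rwa [this, norm_smul, Real.norm_eq_abs, he1, mul_one] at h
  set u : (EuclideanSpace ℝ (Fin n)) := e - P₂ e with hudef
  have hinner_u : ∀ v : (EuclideanSpace ℝ (Fin n)), v ∈ H₂ → ⟪v, u⟫ = 0 := by
    intro v hv
    exact inner_sub_projL H₂ e hv
  have heu : ⟪e, u⟫ = β ^ 2 := by
    have h0 : ⟪P₂ e, u⟫ = 0 := hinner_u _ (projL_mem H₂ e)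
    have : ⟪e, u⟫ = ⟪u, u⟫ + ⟪P₂ e, u⟫ := by
      rw [hudef, inner_sub_left]
      ring
    rw [this, h0, real_inner_self_eq_norm_sq, hβdef]
    ring
  have hwu : ⟪w, u⟫ = 0 := by
    have h0 := horth w hwH hwe
    have h1 : ⟪P₂ w, u⟫ = 0 := hinner_u _ (projL_mem H₂ w)
    have h2 : ⟪w - P₂ w, u⟫ = ⟪w, u⟫ - ⟪P₂ w, u⟫ := inner_sub_left _ _ _
    rw [hudef] at h2 ⊢
    rw [h0] at h2
    linarith [h2, h1]
  have hpu : ⟪p, u⟫ = t * β ^ 2 := by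
    have hp : p = w + t • e := by rw [hwdef]; abel
    rw [hp, inner_add_left, real_inner_smul_left, hwu, heu]
    ring
  have hyu : |⟪y, u⟫| ≤ β := by
    have h0 : ⟪P₂ y, u⟫ = 0 := hinner_u _ (projL_mem H₂ y)
    have h1 : ⟪y, u⟫ = ⟪y - P₂ y, u⟫ := by
      rw [inner_sub_left, h0]; ring
    rw [h1]
    calc |⟪y - P₂ y, u⟫| ≤ ‖y - P₂ y‖ * ‖u‖ := abs_real_inner_le_norm _ _
    _ ≤ 1 * β := by
        apply mul_le_mul hd2 le_rfl (norm_nonneg u) zero_le_one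
    _ = β := one_mul β
  have hypu : |⟪y - p, u⟫| ≤ β := by
    calc |⟪y - p, u⟫| ≤ ‖y - p‖ * ‖u‖ := abs_real_inner_le_norm _ _
    _ ≤ 1 * β := by
        apply mul_le_mul hd1 le_rfl (norm_nonneg u) zero_le_one
    _ = β := one_mul β
  have htb : |t| * β ^ 2 ≤ 2 * β := by
    have hsp : ⟪p, u⟫ = ⟪y, u⟫ - ⟪y - p, u⟫ := by
      rw [inner_sub_left]; ring
    have : |t * β ^ 2| ≤ 2 * β := by
      rw [← hpu, hsp]
      calc |⟪y, u⟫ - ⟪y - p, u⟫| ≤ |⟪y, u⟫| + |⟪y - p, u⟫| := abs_sub _ _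
      _ ≤ β + β := add_le_add hyu hypu
      _ = 2 * β := by ring
    rwa [abs_mul, abs_of_nonneg (by positivity : (0:ℝ) ≤ β ^ 2)] at this
  have ht6 : |t| ≤ 6 / α := by
    have h2 : |t| ≤ 2 / β := by
      rw [le_div_iff₀ hβpos]
      nlinarith [abs_nonneg t]
    have h3 : 2 / β ≤ 6 / α := by
      rw [div_le_div_iff₀ hβpos hα0]
      linarith
    linarith
  have hfinal : 6 / α ≤ 5 * (4 * m * ((10 : ℝ) ^ m + 1)) / α := by
    have hm1 : (1:ℝ) ≤ (m:ℝ) := by exact_mod_cast hm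
    have hC : (6:ℝ) ≤ 5 * (4 * m * ((10 : ℝ) ^ m + 1)) := by nlinarith [hten]
    rw [div_le_div_iff₀ hα0 hα0]
    nlinarith [mul_le_mul_of_nonneg_right hC hα0.le]
  calc Metric.infDist p (W : Set (EuclideanSpace ℝ (Fin n))) ≤ |t| := hdist
  _ ≤ 6 / α := ht6
  _ ≤ 5 * (4 * m * ((10 : ℝ) ^ m + 1)) / α := hfinal
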